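/- Every subcubic tree with at least 7 leaves has an edge whose removal partitions the set of leaves into two sets each of size at least 3. -/

import Mathlib

open SimpleGraph

/-- Size of a maximum matching in the bipartite graph of edges of `G` crossing `(A, Aᶜ)`. -/
noncomputable def mmVal {V : Type*} (G : SimpleGraph V) (A : Set V) : ℕ :=
  sSup {n | ∃ M : Finset (V × V),
    (∀ p ∈ M, p.1 ∈ A ∧ p.2 ∉ A ∧ G.Adj p.1 p.2) ∧
    (∀ p ∈ M, ∀ q ∈ M, p ≠ q → p.1 ≠ q.1 ∧ p.2 ≠ q.2) ∧ M.card = n}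

/-- A branch-decomposition over the vertex set of `G`: a finite subcubic tree together with a
bijection between its leaves and the vertices of `G`. -/
structure BranchDecomp {V : Type*} (G : SimpleGraph V) where
  B : Type
  finB : Finite B
  T : SimpleGraph B
  isTree : T.IsTree
  subcubic : ∀ b : B, (T.neighborSet b).ncard = 1 ∨ (T.neighborSet b).ncard = 3
  L : {b : B // (T.neighborSet b).ncard = 1} ≃ V

/-- The set of vertices of `G` whose leaves lie on the `u`-side of the tree edge `uw`. -/
noncomputable def BranchDecomp.side {V : Type*} {G : SimpleGraph V} (D : BranchDecomp G)
    (u w : D.B) : Set V :=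
  {x : V | (D.T.deleteEdges {s(u, w)}).Reachable (D.L.symm x).1 u}

/-- The width of a branch-decomposition is at most `k`. -/
def BranchDecomp.widthLE {V : Type*} {G : SimpleGraph V} (D : BranchDecomp G) (k : ℕ) : Prop :=
  ∀ u w : D.B, D.T.Adj u w → mmVal G (D.side u w) ≤ k

/-- The maximum matching width of `G`. -/
noncomputable def mmw {V : Type*} (G : SimpleGraph V) : ℕ :=
  sInf {k | ∃ D : BranchDecomp G, D.widthLE k}
/-- `H` is a minor of `G`: there is a family of nonempty, pairwise disjoint, connected branch
sets in `G` indexed by the vertices of `H`, with edges of `H` realized by edges of `G`. -/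
def IsMinor {W : Type*} {V : Type*} (H : SimpleGraph W) (G : SimpleGraph V) : Prop :=
  ∃ φ : W → Set V,
    (∀ w, (φ w).Nonempty) ∧
    (∀ w, (G.induce (φ w)).Connected) ∧
    (∀ w w', w ≠ w' → Disjoint (φ w) (φ w')) ∧
    (∀ w w', H.Adj w w' → ∃ a ∈ φ w, ∃ b ∈ φ w', G.Adj a b)

/-- The `k × k` grid graph: vertices `(i, j)`, edges between vertices at Manhattan distance 1. -/
def gridGraph (k : ℕ) : SimpleGraph (Fin k × Fin k) :=
  SimpleGraph.fromRel (fun p q =>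
    (p.1 = q.1 ∧ (p.2 : ℕ) + 1 = (q.2 : ℕ)) ∨ (p.2 = q.2 ∧ (p.1 : ℕ) + 1 = (q.1 : ℕ)))

/-- The row `R_j` of the `k × k` grid. -/
def gridRow (k : ℕ) (j : Fin k) : Set (Fin k × Fin k) := {p | p.2 = j}

/-- The column `C_i` of the `k × k` grid. -/
def gridCol (k : ℕ) (i : Fin k) : Set (Fin k × Fin k) := {p | p.1 = i}

/-- `X` is small: `mm(X) < k` and `X` contains no full row. -/
def GridSmall (k : ℕ) (X : Set (Fin k × Fin k)) : Prop :=
  mmVal (gridGraph k) X < k ∧ ∀ j : Fin k, ¬ gridRow k j ⊆ X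

/-- `G` is `k`-connected: `|V(G)| ≥ k` and deleting fewer than `k` vertices leaves `G`
connected. -/
def KConnected {V : Type*} (k : ℕ) (G : SimpleGraph V) : Prop :=
  k ≤ Nat.card V ∧ ∀ X : Set V, X.ncard < k → (G.induce Xᶜ).Connected

/-- A block of `G`: a bridge (with its two endpoints), or a maximal 2-connected induced
subgraph. -/
def IsBlock {V : Type*} (G : SimpleGraph V) (Bs : Set V) : Prop :=
  (∃ a b : V, G.Adj a b ∧ G.IsBridge s(a, b) ∧ Bs = {a, b}) ∨
  (KConnected 2 (G.induce Bs) ∧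
    ∀ B' : Set V, Bs ⊆ B' → KConnected 2 (G.induce B') → B' = Bs)

/-- A tree-representation of `G`: a finite subcubic tree `T` and nontrivial subtrees `F x`
for each vertex `x` such that adjacent vertices have intersecting subtrees. -/
structure TreeRep {V : Type*} (G : SimpleGraph V) where
  B : Type
  finB : Finite B
  T : SimpleGraph B
  isTree : T.IsTree
  subcubic : ∀ b : B, (T.neighborSet b).ncard = 1 ∨ (T.neighborSet b).ncard = 3
  F : V → Set B
  nontrivial : ∀ x : V, ∃ u w : B, u ∈ F x ∧ w ∈ F x ∧ T.Adj u w
  subtree : ∀ x : V, (T.induce (F x)).Connected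
  adjMeet : ∀ x y : V, G.Adj x y → (F x ∩ F y).Nonempty

/-- Every edge of the tree lies in at most `k` of the subtrees. -/
def TreeRep.widthLE {V : Type*} {G : SimpleGraph V} (R : TreeRep G) (k : ℕ) : Prop :=
  ∀ u w : R.B, R.T.Adj u w → {x : V | u ∈ R.F x ∧ w ∈ R.F x}.ncard ≤ k

/-- Contraction of the edge `uv` of `G` (the merged vertex is `u`). -/
def contractEdge {V : Type*} (G : SimpleGraph V) (u v : V) : SimpleGraph {x : V // x ≠ v} :=
  SimpleGraph.fromRel (fun x y =>
    G.Adj x.1 y.1 ∨ (x.1 = u ∧ G.Adj v y.1) ∨ (y.1 = u ∧ G.Adj v x.1))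

namespace SubcubicAux

variable {B : Type} [Finite B]

/-- The set of vertices reachable to `u` after deleting the edge `uw`. -/
def side (T : SimpleGraph B) (u w : B) : Set B :=
  {x : B | (T.deleteEdges {s(u, w)}).Reachable x u}

lemma mem_side_self (T : SimpleGraph B) (u w : B) : u ∈ side T u w :=
  Reachable.refl u

lemma side_swap (T : SimpleGraph B) (u w : B) :
    side T w u = {x : B | (T.deleteEdges {s(u, w)}).Reachable x w} := by
  unfold side
  rw [Sym2.eq_swap]

lemma not_reach_of_adj {T : SimpleGraph B} (htree : T.IsTree) {u w : B} (h : T.Adj u w) :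
    ¬ (T.deleteEdges {s(u, w)}).Reachable u w := by
  have hb := (isAcyclic_iff_forall_adj_isBridge.mp htree.2) h
  exact isBridge_iff.mp hb

lemma reach_or {T : SimpleGraph B} (u w : B) :
    ∀ {x : B}, T.Walk x u →
      (T.deleteEdges {s(u, w)}).Reachable x u ∨ (T.deleteEdges {s(u, w)}).Reachable x w
  | _, SimpleGraph.Walk.nil => Or.inl (Reachable.refl _)
  | x, @SimpleGraph.Walk.cons _ _ _ y _ hxy q => by
    by_cases he : s(x, y) = s(u, w)
    · rw [Sym2.eq_iff] at he
      rcases he with ⟨rfl, rfl⟩ | ⟨rfl, rfl⟩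
      · exact Or.inl (Reachable.refl _)
      · exact Or.inr (Reachable.refl _)
    · have hadj : (T.deleteEdges {s(u, w)}).Adj x y := by
        rw [deleteEdges_adj]
        exact ⟨hxy, by simpa using he⟩
      rcases reach_or u w q with h | h
      · exact Or.inl (hadj.reachable.trans h)
      · exact Or.inr (hadj.reachable.trans h)

lemma side_union (T : SimpleGraph B) (hconn : T.Connected) (u w x : B) :
    x ∈ side T u w ∨ x ∈ side T w u := by
  obtain ⟨p⟩ := hconn.preconnected x u
  rcases reach_or u w p with h | h
  · exact Or.inl h
  · right
    show (T.deleteEdges {s(w, u)}).Reachable x w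
    rw [Sym2.eq_swap]
    exact h

lemma side_disjoint {T : SimpleGraph B} (htree : T.IsTree) {u w : B} (h : T.Adj u w) {x : B}
    (h1 : x ∈ side T u w) (h2 : (T.deleteEdges {s(u, w)}).Reachable x w) : False :=
  not_reach_of_adj htree h (h1.symm.trans h2)

lemma reach_leaf {T : SimpleGraph B} {u w : B} (hleaf : (T.neighborSet w).ncard = 1)
    (h : T.Adj w u) {x : B} (hr : (T.deleteEdges {s(w, u)}).Reachable x w) : x = w := by
  obtain ⟨p⟩ := hr.symm
  cases p with
  | nil => rfl
  | cons hwy q =>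
    exfalso
    rw [deleteEdges_adj] at hwy
    obtain ⟨a, ha⟩ := Set.ncard_eq_one.mp hleaf
    have hu : u = a := by
      have hm : u ∈ T.neighborSet w := h
      rw [ha] at hm; exact hm
    have hy : _ ∈ T.neighborSet w := hwy.1
    rw [ha] at hy
    rw [Set.mem_singleton_iff] at hy
    exact hwy.2 (by rw [hy, ← hu]; rfl)

/-- Every vertex on the `u`-side either is `u` or lies beyond some neighbor `a ≠ w` of `u`. -/
lemma side_subset_union {T : SimpleGraph B} (u w : B) {x : B}
    (hp : (T.deleteEdges {s(u, w)}).Reachable x u) :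
    x = u ∨ ∃ a : B, T.Adj u a ∧ a ≠ w ∧ x ∈ side T a u := by
  obtain ⟨p0⟩ := hp
  suffices h : ∀ x' z : B, (T.deleteEdges {s(u, w)}).Walk x' z → z = u →
      x' = u ∨ ∃ a : B, T.Adj u a ∧ a ≠ w ∧ x' ∈ side T a u from h x u p0 rfl
  intro x' z p
  clear p0
  induction p with
  | nil => intro hz; exact Or.inl hz
  | @cons x y z' hxy q ih =>
    intro hz
    by_cases hxu : x = u
    · exact Or.inl hxu
    by_cases hyu : y = u
    · rw [deleteEdges_adj, hyu] at hxy
      refine Or.inr ⟨x, hxy.1.symm, ?_, mem_side_self T x u⟩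
      rintro rfl
      exact hxy.2 (by rw [Sym2.eq_swap]; rfl)
    · rcases ih hz with h | ⟨a, hau, haw, hy⟩
      · exact absurd h hyu
      · refine Or.inr ⟨a, hau, haw, ?_⟩
        have hadj : (T.deleteEdges {s(a, u)}).Adj x y := by
          rw [deleteEdges_adj]
          refine ⟨(deleteEdges_adj.mp hxy).1, fun hc => ?_⟩
          rw [Set.mem_singleton_iff, Sym2.eq_iff] at hc
          rcases hc with ⟨h1, h2⟩ | ⟨h1, h2⟩
          · exact hyu h2
          · exact hxu h1
        exact hadj.reachable.trans hy

lemma reach_delete_extra {T : SimpleGraph B} {a : B} (e f : Sym2 B) {u w : B} (hf : f = s(u, w)) :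
    ∀ {x : B}, (T.deleteEdges {e}).Walk x a →
      (T.deleteEdges {e, f}).Reachable x a ∨ (T.deleteEdges {e}).Reachable u a
  | _, SimpleGraph.Walk.nil => Or.inl (Reachable.refl _)
  | x, @SimpleGraph.Walk.cons _ _ _ y _ hxy q => by
    rcases reach_delete_extra e f hf q with h | h
    · by_cases hef : s(x, y) = f
      · rw [hf, Sym2.eq_iff] at hef
        rcases hef with ⟨rfl, rfl⟩ | ⟨hyx, rfl⟩
        · exact Or.inr ⟨SimpleGraph.Walk.cons hxy q⟩
        · exact Or.inr ⟨q⟩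
      · have hadj : (T.deleteEdges {e, f}).Adj x y := by
          rw [deleteEdges_adj]
          refine ⟨(deleteEdges_adj.mp hxy).1, fun hc => ?_⟩
          rcases hc with hc | hc
          · exact (deleteEdges_adj.mp hxy).2 hc
          · exact hef hc
        exact Or.inl (hadj.reachable.trans h)
    · exact Or.inr h

lemma delete_pair_le (T : SimpleGraph B) (e f : Sym2 B) :
    T.deleteEdges {e, f} ≤ T.deleteEdges {f} := by
  intro x y h
  rw [deleteEdges_adj] at h ⊢
  exact ⟨h.1, fun hc => h.2 (Or.inr hc)⟩

lemma delete_pair_le' (T : SimpleGraph B) (e f : Sym2 B) :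
    T.deleteEdges {e, f} ≤ T.deleteEdges {e} := by
  intro x y h
  rw [deleteEdges_adj] at h ⊢
  exact ⟨h.1, fun hc => h.2 (Or.inl hc)⟩

lemma not_reach_symm {T : SimpleGraph B} (htree : T.IsTree) {u a : B} (h : T.Adj u a) :
    ¬ (T.deleteEdges {s(a, u)}).Reachable u a := by
  rw [Sym2.eq_swap]
  exact not_reach_of_adj htree h

lemma side_mono {T : SimpleGraph B} (htree : T.IsTree) {u w a : B} (hadj : T.Adj u w)
    (ha : T.Adj u a) (haw : a ≠ w) : side T a u ⊆ side T u w := by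
  intro x hx
  obtain ⟨p⟩ := hx
  rcases reach_delete_extra (s(a, u)) (s(u, w)) rfl p with h | h
  · have h1 : (T.deleteEdges {s(u, w)}).Reachable x a :=
      h.mono (delete_pair_le T _ _)
    have h2 : (T.deleteEdges {s(u, w)}).Adj a u := by
      rw [deleteEdges_adj]
      refine ⟨ha.symm, fun hc => ?_⟩
      rw [Set.mem_singleton_iff, Sym2.eq_iff] at hc
      rcases hc with ⟨h1, h2⟩ | ⟨h1, h2⟩
      · exact hadj.ne h2
      · exact haw h1
    exact h1.trans h2.reachable
  · exact absurd h (not_reach_symm htree ha)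

lemma sides_disjoint {T : SimpleGraph B} (htree : T.IsTree) {u a b : B} (ha : T.Adj u a)
    (hb : T.Adj u b) (hab : a ≠ b) {x : B} (hxa : x ∈ side T a u) (hxb : x ∈ side T b u) :
    False := by
  obtain ⟨p⟩ := hxa
  rcases reach_delete_extra (s(a, u)) (s(u, b)) rfl p with h | h
  · have h1 : (T.deleteEdges {s(u, b)}).Reachable x a := h.mono (delete_pair_le T _ _)
    have h2 : (T.deleteEdges {s(u, b)}).Adj a u := by
      rw [deleteEdges_adj]
      refine ⟨ha.symm, fun hc => ?_⟩
      rw [Set.mem_singleton_iff, Sym2.eq_iff] at hc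
      rcases hc with ⟨h1', h2'⟩ | ⟨h1', h2'⟩
      · exact ha.ne h1'.symm
      · exact hab h1'
    have h3 : (T.deleteEdges {s(u, b)}).Reachable x u := h1.trans h2.reachable
    have h4 : (T.deleteEdges {s(u, b)}).Reachable x b := by
      have : (T.deleteEdges {s(b, u)}).Reachable x b := hxb
      rwa [Sym2.eq_swap] at this
    exact not_reach_of_adj htree hb (h3.symm.trans h4)
  · exact absurd h (not_reach_symm htree ha)

/-- The leaf count on the `u`-side of edge `uw`. -/
noncomputable def n (T : SimpleGraph B) (u w : B) : ℕ :=
  ({b : B | (T.neighborSet b).ncard = 1} ∩ side T u w).ncard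

lemma sum_eq {T : SimpleGraph B} (htree : T.IsTree) {u w : B} (h : T.Adj u w) :
    n T u w + n T w u = {b : B | (T.neighborSet b).ncard = 1}.ncard := by
  unfold n
  rw [← Set.ncard_union_eq, ← Set.inter_union_distrib_left]
  · congr 1
    rw [Set.inter_eq_left]
    intro x _
    exact side_union T htree.1 u w x
  · rw [Set.disjoint_left]
    rintro x ⟨_, hx1⟩ ⟨_, hx2⟩
    rw [side_swap] at hx2
    exact side_disjoint htree h hx1 hx2

lemma deg3_neighbors {T : SimpleGraph B} {u w : B} (h3 : (T.neighborSet u).ncard = 3)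
    (hw : T.Adj u w) : ∃ a b : B, T.Adj u a ∧ T.Adj u b ∧ a ≠ b ∧ a ≠ w ∧ b ≠ w ∧
      T.neighborSet u = {w, a, b} := by
  obtain ⟨x, y, z, hxy, hxz, hyz, hs⟩ := Set.ncard_eq_three.mp h3
  have hwmem : w ∈ T.neighborSet u := hw
  rw [hs] at hwmem
  have hadj : ∀ c ∈ ({x, y, z} : Set B), T.Adj u c := by
    intro c hc; rw [← hs] at hc; exact hc
  rcases hwmem with rfl | rfl | rfl
  · exact ⟨y, z, hadj y (by simp), hadj z (by simp), hyz, hxy.symm, hxz.symm, hs⟩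
  · refine ⟨x, z, hadj x (by simp), hadj z (by simp), hxz, hxy, hyz.symm, ?_⟩
    rw [hs]; ext c; simp; tauto
  · refine ⟨x, y, hadj x (by simp), hadj y (by simp), hxy, hxz, hyz, ?_⟩
    rw [hs]; ext c; simp; tauto

lemma side_split {T : SimpleGraph B} (htree : T.IsTree) {u w a b : B} (hadj : T.Adj u w)
    (ha : T.Adj u a) (hb : T.Adj u b) (haw : a ≠ w) (hbw : b ≠ w)
    (hnb : T.neighborSet u = {w, a, b}) :
    side T u w = {u} ∪ side T a u ∪ side T b u := by
  apply Set.Subset.antisymm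
  · intro x hx
    rcases side_subset_union u w hx with rfl | ⟨c, hc, hcw, hxc⟩
    · exact Or.inl (Or.inl rfl)
    · have : c ∈ T.neighborSet u := hc
      rw [hnb] at this
      rcases this with rfl | rfl | rfl
      · exact absurd rfl hcw
      · exact Or.inl (Or.inr hxc)
      · exact Or.inr hxc
  · rintro x ((rfl | hx) | hx)
    · exact mem_side_self T x w
    · exact side_mono htree hadj ha haw hx
    · exact side_mono htree hadj hb hbw hx

lemma n_split {T : SimpleGraph B} (htree : T.IsTree) {u w a b : B} (hadj : T.Adj u w)
    (h3 : (T.neighborSet u).ncard = 3) (ha : T.Adj u a) (hb : T.Adj u b) (hab : a ≠ b)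
    (haw : a ≠ w) (hbw : b ≠ w) (hnb : T.neighborSet u = {w, a, b}) :
    n T u w = n T a u + n T b u := by
  unfold n
  rw [side_split htree hadj ha hb haw hbw hnb]
  have hu : {c : B | (T.neighborSet c).ncard = 1} ∩ ({u} ∪ side T a u ∪ side T b u)
      = ({c : B | (T.neighborSet c).ncard = 1} ∩ side T a u)
        ∪ ({c : B | (T.neighborSet c).ncard = 1} ∩ side T b u) := by
    ext c
    simp only [Set.mem_inter_iff, Set.mem_union, Set.mem_singleton_iff, Set.mem_setOf_eq]
    constructor
    · rintro ⟨hc, (rfl | h) | h⟩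
      · rw [h3] at hc; omega
      · exact Or.inl ⟨hc, h⟩
      · exact Or.inr ⟨hc, h⟩
    · rintro (⟨hc, h⟩ | ⟨hc, h⟩)
      · exact ⟨hc, Or.inl (Or.inr h)⟩
      · exact ⟨hc, Or.inr h⟩
  rw [hu, Set.ncard_union_eq]
  rw [Set.disjoint_left]
  rintro x ⟨_, hx1⟩ ⟨_, hx2⟩
  exact sides_disjoint htree ha hb hab hx1 hx2

lemma one_le_n_aux {T : SimpleGraph B} (htree : T.IsTree)
    (hsub : ∀ c : B, (T.neighborSet c).ncard = 1 ∨ (T.neighborSet c).ncard = 3) :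
    ∀ (k : ℕ) (u w : B), T.Adj u w → (side T u w).ncard ≤ k → 1 ≤ n T u w := by
  intro k
  induction k with
  | zero =>
    intro u w hadj hcard
    have : 0 < (side T u w).ncard :=
      (Set.ncard_pos (Set.toFinite _)).mpr ⟨u, mem_side_self T u w⟩
    omega
  | succ k ih =>
    intro u w hadj hcard
    rcases hsub u with h1 | h3
    · exact (Set.ncard_pos (Set.toFinite _)).mpr ⟨u, h1, mem_side_self T u w⟩
    · obtain ⟨a, b, ha, hb, hab, haw, hbw, hnb⟩ := deg3_neighbors h3 hadj
      have hss : side T a u ⊂ side T u w := by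
        refine ⟨side_mono htree hadj ha haw, fun hsub2 => ?_⟩
        have : u ∈ side T a u := hsub2 (mem_side_self T u w)
        exact not_reach_symm htree ha this
      have hlt : (side T a u).ncard < (side T u w).ncard := Set.ncard_lt_ncard hss
      have h1 : 1 ≤ n T a u := ih a u ha.symm (by omega)
      have hmono : n T a u ≤ n T u w :=
        Set.ncard_le_ncard
          (Set.inter_subset_inter_right _ (side_mono htree hadj ha haw)) (Set.toFinite _)
      omega

lemma one_le_n {T : SimpleGraph B} (htree : T.IsTree)
    (hsub : ∀ c : B, (T.neighborSet c).ncard = 1 ∨ (T.neighborSet c).ncard = 3)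
    {u w : B} (hadj : T.Adj u w) : 1 ≤ n T u w :=
  one_le_n_aux htree hsub (side T u w).ncard u w hadj le_rfl

lemma n_leaf {T : SimpleGraph B} {u w : B} (hleaf : (T.neighborSet w).ncard = 1)
    (hadj : T.Adj w u) : n T w u ≤ 1 := by
  have : side T w u ⊆ {w} := by
    intro x hx
    exact reach_leaf hleaf hadj hx
  calc n T w u ≤ ({w} : Set B).ncard :=
        Set.ncard_le_ncard ((Set.inter_subset_right).trans this)
    _ = 1 := Set.ncard_singleton w

/-- The main auxiliary lemma: on an edge minimizing the larger leaf-side, the smaller side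
has at least 3 leaves. -/
lemma main_aux {T : SimpleGraph B} (htree : T.IsTree)
    (hsub : ∀ c : B, (T.neighborSet c).ncard = 1 ∨ (T.neighborSet c).ncard = 3)
    (hL : 7 ≤ {b : B | (T.neighborSet b).ncard = 1}.ncard)
    {u w : B} (hadj : T.Adj u w)
    (hmin : ∀ a b : B, T.Adj a b → max (n T u w) (n T w u) ≤ max (n T a b) (n T b a))
    (hle : n T u w ≤ n T w u) : 3 ≤ n T u w := by
  by_contra hc
  push_neg at hc
  have hsum : n T u w + n T w u = {b : B | (T.neighborSet b).ncard = 1}.ncard :=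
    sum_eq htree hadj
  have hbig : 5 ≤ n T w u := by omega
  have h3 : (T.neighborSet w).ncard = 3 := by
    rcases hsub w with h1 | h3
    · have := n_leaf h1 hadj.symm; omega
    · exact h3
  obtain ⟨a, b, ha, hb, hab, hau, hbu, hnb⟩ := deg3_neighbors h3 hadj.symm
  have hsplit : n T w u = n T a w + n T b w :=
    n_split htree hadj.symm h3 ha hb hab hau hbu hnb
  have key : ∀ c d : B, T.Adj w c → T.Adj w d → n T w u = n T c w + n T d w →
      n T d w ≤ n T c w → False := by
    intro c d hc' hd' hsplit' hcd
    have h1d : 1 ≤ n T d w := one_le_n htree hsub hd'.symm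
    have hsumc : n T c w + n T w c = {b : B | (T.neighborSet b).ncard = 1}.ncard :=
      sum_eq htree hc'.symm
    have hminc := hmin w c hc'
    have hmax : max (n T u w) (n T w u) = n T w u := max_eq_right hle
    rw [hmax] at hminc
    rcases le_max_iff.mp hminc with h | h <;> omega
  rcases le_total (n T b w) (n T a w) with hcd | hcd
  · exact key a b ha hb hsplit hcd
  · exact key b a hb ha (by omega) hcd

end SubcubicAux

/-- a subcubic tree with at least 7 leaves has an edge splitting the leaves into
two sets each of size at least 3. -/
theorem subcubic_tree_balanced_edge (B : Type) [Finite B] (T : SimpleGraph B)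
    (htree : T.IsTree)
    (hsub : ∀ b : B, (T.neighborSet b).ncard = 1 ∨ (T.neighborSet b).ncard = 3)
    (hleaves : 7 ≤ {b : B | (T.neighborSet b).ncard = 1}.ncard) :
    ∃ u w : B, T.Adj u w ∧
      3 ≤ {b : B | (T.neighborSet b).ncard = 1 ∧
            (T.deleteEdges {s(u, w)}).Reachable b u}.ncard ∧
      3 ≤ {b : B | (T.neighborSet b).ncard = 1 ∧
            (T.deleteEdges {s(u, w)}).Reachable b w}.ncard := by
  classical
  obtain ⟨v, hv⟩ : ∃ v : B, (T.neighborSet v).ncard = 1 := by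
    have hpos : 0 < {b : B | (T.neighborSet b).ncard = 1}.ncard := by omega
    obtain ⟨v, hv⟩ := (Set.ncard_pos (Set.toFinite _)).mp hpos
    exact ⟨v, hv⟩
  obtain ⟨w0, hw0⟩ := Set.ncard_eq_one.mp hv
  have hadj0 : T.Adj v w0 := by
    have : w0 ∈ T.neighborSet v := by rw [hw0]; rfl
    exact this
  set S : Set ℕ :=
    {m | ∃ u w : B, T.Adj u w ∧ max (SubcubicAux.n T u w) (SubcubicAux.n T w u) = m} with hS
  have hSne : S.Nonempty := ⟨_, v, w0, hadj0, rfl⟩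
  obtain ⟨u, w, hadj, hm⟩ := Nat.sInf_mem hSne
  have hmin : ∀ a b : B, T.Adj a b →
      max (SubcubicAux.n T u w) (SubcubicAux.n T w u)
        ≤ max (SubcubicAux.n T a b) (SubcubicAux.n T b a) := by
    intro a b hab
    rw [hm]
    exact Nat.sInf_le ⟨a, b, hab, rfl⟩
  have hboth : 3 ≤ SubcubicAux.n T u w ∧ 3 ≤ SubcubicAux.n T w u := by
    rcases le_total (SubcubicAux.n T u w) (SubcubicAux.n T w u) with h | h
    · have h3 := SubcubicAux.main_aux htree hsub hleaves hadj hmin h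
      exact ⟨h3, le_trans h3 h⟩
    · have hmin' : ∀ a b : B, T.Adj a b →
          max (SubcubicAux.n T w u) (SubcubicAux.n T u w)
            ≤ max (SubcubicAux.n T a b) (SubcubicAux.n T b a) := by
        intro a b hab
        rw [max_comm]
        exact hmin a b hab
      have h3 := SubcubicAux.main_aux htree hsub hleaves hadj.symm hmin' h
      exact ⟨le_trans h3 h, h3⟩
  refine ⟨u, w, hadj, ?_, ?_⟩
  · have e1 : {b : B | (T.neighborSet b).ncard = 1 ∧
        (T.deleteEdges {s(u, w)}).Reachable b u}
        = {b : B | (T.neighborSet b).ncard = 1} ∩ SubcubicAux.side T u w := by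
      ext b
      simp [SubcubicAux.side, Set.mem_inter_iff]
    rw [e1]
    exact hboth.1
  · have e2 : {b : B | (T.neighborSet b).ncard = 1 ∧
        (T.deleteEdges {s(u, w)}).Reachable b w}
        = {b : B | (T.neighborSet b).ncard = 1} ∩ SubcubicAux.side T w u := by
      rw [SubcubicAux.side_swap]
      ext b
      simp [Set.mem_inter_iff]
    rw [e2]
    exact hboth.2
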